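/- arXiv:1308.2810 — 5 statements merged into one kernel-verified Lean document; each statement's English description precedes it below -/
import Mathlib

section
/- Let X be a topological space and f : X → X a continuous map. Say f is 'chaotic' if any two nonempty open subsets of X share a periodic orbit, i.e., for all nonempty open U, V ⊆ X there is a periodic point p of f whose forward orbit meets both U and V. Then f is chaotic if and only if f is topologically transitive and the set of periodic points of f is dense in X. -/
private lemma iter_mul_fixed {X : Type*} (f : X → X) {p : X} {n : ℕ}
    (hp : f^[n] p = p) : ∀ j : ℕ, f^[n * j] p = p := by
  intro j
  induction j with
  | zero => simp
  | succ j ih =>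
      have : n * (j + 1) = n * j + n := by ring
      rw [this, Function.iterate_add_apply, hp, ih]

/-- Chaotic ↔ transitive ∧ dense periodic points. -/
theorem chaotic_iff_transitive_and_densePeriodic
    {X : Type*} [TopologicalSpace X] (f : X → X) (hf : Continuous f) :
    (∀ U V : Set X, IsOpen U → IsOpen V → U.Nonempty → V.Nonempty →
        ∃ p : X, (∃ n ≥ 1, f^[n] p = p) ∧
          (∃ k : ℕ, f^[k] p ∈ U) ∧ (∃ k : ℕ, f^[k] p ∈ V)) ↔
    ((∀ U V : Set X, IsOpen U → IsOpen V → U.Nonempty → V.Nonempty →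
        ∃ n ≥ 1, (f^[n] '' U ∩ V).Nonempty) ∧
      Dense {p : X | ∃ n ≥ 1, f^[n] p = p}) := by
  constructor
  · intro h
    constructor
    · intro U V hU hV hUne hVne
      obtain ⟨p, ⟨n, hn1, hp⟩, ⟨k, hk⟩, ⟨l, hl⟩⟩ := h U V hU hV hUne hVne
      refine ⟨l + n * (k + 1) - k, ?_, f^[l] p, ⟨f^[k] p, hk, ?_⟩, hl⟩
      · have : k + 1 ≤ n * (k + 1) := Nat.le_mul_of_pos_left _ hn1
        omega
      · have hmk : (l + n * (k + 1) - k) + k = l + n * (k + 1) := by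
          have : k + 1 ≤ n * (k + 1) := Nat.le_mul_of_pos_left _ hn1
          omega
        calc f^[l + n * (k + 1) - k] (f^[k] p)
            = f^[(l + n * (k + 1) - k) + k] p := (Function.iterate_add_apply f _ k p).symm
          _ = f^[l] (f^[n * (k + 1)] p) := by rw [hmk, Function.iterate_add_apply]
          _ = f^[l] p := by rw [iter_mul_fixed f hp]
    · rw [dense_iff_inter_open]
      intro U hU hUne
      obtain ⟨p, ⟨n, hn1, hp⟩, ⟨k, hk⟩, _⟩ := h U U hU hU hUne hUne
      refine ⟨f^[k] p, hk, n, hn1, ?_⟩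
      calc f^[n] (f^[k] p) = f^[n + k] p := (Function.iterate_add_apply f n k p).symm
        _ = f^[k] (f^[n] p) := by rw [Nat.add_comm, Function.iterate_add_apply]
        _ = f^[k] p := by rw [hp]
  · rintro ⟨htrans, hdense⟩ U V hU hV hUne hVne
    obtain ⟨n, hn1, y, ⟨x, hxU, hxy⟩, hyV⟩ := htrans U V hU hV hUne hVne
    have hW : IsOpen (U ∩ f^[n] ⁻¹' V) := hU.inter ((hf.iterate n).isOpen_preimage V hV)
    have hWne : (U ∩ f^[n] ⁻¹' V).Nonempty := ⟨x, hxU, by simp [Set.mem_preimage, hxy, hyV]⟩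
    obtain ⟨p, hpW, hpper⟩ := hdense.inter_open_nonempty _ hW hWne
    exact ⟨p, hpper, ⟨0, by simpa using hpW.1⟩, ⟨n, hpW.2⟩⟩
end

section
/- If f : X → X is topologically transitive and the periodic points of f are dense in X, then any two nonempty open subsets of X share a periodic orbit: for all nonempty open U, V there is a periodic point p with O(p) ∩ U ≠ ∅ and O(p) ∩ V ≠ ∅. -/
/-- Transitive with dense periodic points implies chaotic. -/
theorem chaotic_of_transitive_densePeriodic
    {X : Type*} [TopologicalSpace X] (f : X → X) (hf : Continuous f)
    (htrans : ∀ U V : Set X, IsOpen U → IsOpen V → U.Nonempty → V.Nonempty →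
        ∃ n ≥ 1, (f^[n] '' U ∩ V).Nonempty)
    (hdense : Dense {p : X | ∃ n ≥ 1, f^[n] p = p}) :
    ∀ U V : Set X, IsOpen U → IsOpen V → U.Nonempty → V.Nonempty →
      ∃ p : X, (∃ n ≥ 1, f^[n] p = p) ∧
        (∃ k : ℕ, f^[k] p ∈ U) ∧ (∃ k : ℕ, f^[k] p ∈ V) := by
  intro U V hU hV hUne hVne
  obtain ⟨n, hn, x, ⟨y, hyU, hyx⟩, hxV⟩ := htrans U V hU hV hUne hVne
  have hW : IsOpen (U ∩ f^[n] ⁻¹' V) := hU.inter ((hf.iterate n).isOpen_preimage V hV)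
  have hWne : (U ∩ f^[n] ⁻¹' V).Nonempty := ⟨y, hyU, by simp [hyx, hxV]⟩
  obtain ⟨p, ⟨hpU, hpV⟩, hper⟩ := hdense.inter_open_nonempty _ hW hWne
  exact ⟨p, hper, ⟨0, by simpa using hpU⟩, ⟨n, hpV⟩⟩
end

section
/- Let X be a Hausdorff uniform space and f : X → X a map having two periodic points with disjoint orbits. Then there is an entourage W such that for every x ∈ X there is a periodic point q of f with W[fᵏ(q)] ∩ W[x] = ∅ for all k ≥ 0. -/
/-- Lemma 2: in a Hausdorff uniform space, if `f` has two periodic points with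
disjoint orbits, there is an entourage `W` such that for every `x` there is a
periodic point `q` whose orbit's `W`-balls are disjoint from `W[x]`. -/
theorem exists_entourage_ball_orbit_disjoint
    {X : Type*} [UniformSpace X] [T2Space X] (f : X → X)
    (r s : X) (hr : ∃ n ≥ 1, f^[n] r = r) (hs : ∃ n ≥ 1, f^[n] s = s)
    (hdisj : (Set.range fun k : ℕ => f^[k] r) ∩ (Set.range fun k : ℕ => f^[k] s) = ∅) :
    ∃ W ∈ uniformity X, ∀ x : X, ∃ q : X, (∃ n ≥ 1, f^[n] q = q) ∧
      ∀ k : ℕ, UniformSpace.ball (f^[k] q) W ∩ UniformSpace.ball x W = ∅ := by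
  obtain ⟨n, hn1, hnr⟩ := hr
  obtain ⟨m, hm1, hms⟩ := hs
  have hne : ∀ i j : ℕ, f^[i] r ≠ f^[j] s := by
    intro i j h
    have : f^[i] r ∈ (Set.range fun k : ℕ => f^[k] r) ∩ (Set.range fun k : ℕ => f^[k] s) :=
      ⟨⟨i, rfl⟩, ⟨j, h.symm⟩⟩
    simp [hdisj] at this
  -- choose separating entourages
  have hU : ∀ p : ℕ × ℕ, ∃ U ∈ uniformity X, (f^[p.1] r, f^[p.2] s) ∉ U := by
    intro p
    by_contra h
    push_neg at h
    exact hne p.1 p.2 (eq_of_uniformity fun {V} hV => h V hV)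
  choose U hUmem hUnot using hU
  set V : Set (X × X) := ⋂ p ∈ (Finset.range n ×ˢ Finset.range m : Finset (ℕ × ℕ)), U p with hV
  have hVmem : V ∈ uniformity X := by
    rw [hV]
    exact (Filter.biInter_finset_mem _).2 fun p _ => hUmem p
  have hVnot : ∀ k l : ℕ, (f^[k] r, f^[l] s) ∉ V := by
    intro k l hmem
    have hk : f^[k] r = f^[k % n] r := ((show Function.IsPeriodicPt f n r from hnr).iterate_mod_apply k).symm
    have hl : f^[l] s = f^[l % m] s := ((show Function.IsPeriodicPt f m s from hms).iterate_mod_apply l).symm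
    have hpmem : ((k % n, l % m) : ℕ × ℕ) ∈ (Finset.range n ×ˢ Finset.range m : Finset (ℕ × ℕ)) := by
      simp [Finset.mem_product, Nat.mod_lt _ (by omega : 0 < n), Nat.mod_lt _ (by omega : 0 < m)]
    have := Set.mem_iInter₂.1 hmem (k % n, l % m) hpmem
    exact hUnot (k % n, l % m) (by rw [hk, hl] at hmem; exact Set.mem_iInter₂.1 hmem _ hpmem)
  -- get symmetric W with W ○ W ○ W ○ W ⊆ V
  obtain ⟨V₁, hV₁, hV₁V⟩ := comp_mem_uniformity_sets hVmem
  obtain ⟨V₂, hV₂, hV₂V₁⟩ := comp_mem_uniformity_sets hV₁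
  refine ⟨SetRel.symmetrize V₂, symmetrize_mem_uniformity hV₂, ?_⟩
  set W := SetRel.symmetrize V₂ with hW
  have hWsymm : SetRel.IsSymm W := SetRel.isSymm_symmetrize
  have hWsub : W ⊆ V₂ := SetRel.symmetrize_subset_self
  have key : ∀ a b c : X, (a, b) ∈ W → (b, c) ∈ W → (a, c) ∈ V₁ := fun a b c hab hbc =>
    hV₂V₁ ⟨b, hWsub hab, hWsub hbc⟩
  intro x
  by_cases hcase : ∀ k : ℕ, UniformSpace.ball (f^[k] r) W ∩ UniformSpace.ball x W = ∅
  · exact ⟨r, ⟨n, hn1, hnr⟩, hcase⟩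
  · push_neg at hcase
    obtain ⟨k, hk⟩ := hcase
    obtain ⟨z, hz1, hz2⟩ := hk
    refine ⟨s, ⟨m, hm1, hms⟩, fun l => ?_⟩
    by_contra hl
    obtain ⟨w, hw1, hw2⟩ := Set.nonempty_iff_ne_empty.2 hl
    -- chain: f^[k] r → z → x → w → f^[l] s
    have h1 : (f^[k] r, z) ∈ W := hz1
    have h2 : (z, x) ∈ W := hWsymm.symm _ _ hz2
    have h3 : (x, w) ∈ W := hw2
    have h4 : (w, f^[l] s) ∈ W := hWsymm.symm _ _ hw1
    exact hVnot k l (hV₁V ⟨x, key _ _ _ h1 h2, key _ _ _ h3 h4⟩)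
end

section
/- Let X be a Hausdorff uniform space with no isolated points and f : X → X continuous. If f is topologically transitive and the set of periodic points of f is dense in X (and f has at least two periodic points with disjoint orbits), then f has sensitive dependence on initial conditions: there is an entourage W such that for every x ∈ X and every neighborhood N of x there exist y ∈ N and n ∈ ℕ with (fⁿ(x), fⁿ(y)) ∉ W. -/
open UniformSpace Set

private lemma iterate_mod_of_periodic' {X : Type*} (f : X → X) {p : X} {m : ℕ}
    (hp : f^[m] p = p) (k : ℕ) : f^[k] p = f^[k % m] p := by
  conv_lhs => rw [← Nat.mod_add_div k m]
  rw [Function.iterate_add_apply, Function.iterate_mul, Function.iterate_fixed hp]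

private lemma sep_entourage' {X : Type*} [UniformSpace X] [T2Space X] {a b : X}
    (h : a ≠ b) : ∃ V ∈ uniformity X, (a, b) ∉ V := by
  have hb : {b}ᶜ ∈ nhds a := compl_singleton_mem_nhds h
  rw [nhds_eq_comap_uniformity] at hb
  obtain ⟨V, hV, hsub⟩ := hb
  exact ⟨V, hV, fun hab => hsub hab rfl⟩

/-- Theorem 1: chaotic implies sensitive dependence on initial conditions,
in a Hausdorff uniform space with no isolated points. -/
theorem sensitive_of_chaotic
    {X : Type*} [UniformSpace X] [T2Space X]
    (hni : ∀ x : X, (nhdsWithin x {x}ᶜ).NeBot)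
    (f : X → X) (hf : Continuous f)
    (htrans : ∀ U V : Set X, IsOpen U → IsOpen V → U.Nonempty → V.Nonempty →
        ∃ n ≥ 1, (f^[n] '' U ∩ V).Nonempty)
    (hdense : Dense {p : X | ∃ n ≥ 1, f^[n] p = p})
    (r s : X) (hr : ∃ n ≥ 1, f^[n] r = r) (hs : ∃ n ≥ 1, f^[n] s = s)
    (hdisj : (Set.range fun k : ℕ => f^[k] r) ∩ (Set.range fun k : ℕ => f^[k] s) = ∅) :
    ∃ W ∈ uniformity X, ∀ x : X, ∀ N ∈ nhds x, ∃ y ∈ N, ∃ n : ℕ,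
      (f^[n] x, f^[n] y) ∉ W := by
  classical
  obtain ⟨mr, hmr1, hmr⟩ := hr
  obtain ⟨ms, hms1, hms⟩ := hs
  set Or : Set X := Set.range fun k : ℕ => f^[k] r with hOr
  set Os : Set X := Set.range fun k : ℕ => f^[k] s with hOs
  -- the two orbits are finite
  have hfinr : Or.Finite := by
    apply Set.Finite.subset ((Set.finite_Iio mr).image fun k => f^[k] r)
    rintro _ ⟨k, rfl⟩
    exact ⟨k % mr, Nat.mod_lt k hmr1, (iterate_mod_of_periodic' f hmr k).symm⟩
  have hfins : Os.Finite := by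
    apply Set.Finite.subset ((Set.finite_Iio ms).image fun k => f^[k] s)
    rintro _ ⟨k, rfl⟩
    exact ⟨k % ms, Nat.mod_lt k hms1, (iterate_mod_of_periodic' f hms k).symm⟩
  -- separating entourage for each pair from the two orbits
  have hpair : ∀ ab : X × X, ∃ V ∈ uniformity X, ab ∈ Or ×ˢ Os → ab ∉ V := by
    intro ab
    by_cases hab : ab ∈ Or ×ˢ Os
    · have hne : ab.1 ≠ ab.2 := by
        intro h
        have : ab.1 ∈ Or ∩ Os := ⟨hab.1, h ▸ hab.2⟩
        rw [hOr, hOs] at this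
        rw [hdisj] at this
        exact this
      obtain ⟨V, hV, hVn⟩ := sep_entourage' hne
      exact ⟨V, hV, fun _ => hVn⟩
    · exact ⟨Set.univ, Filter.univ_mem, fun h => absurd h hab⟩
  choose V hVmem hVnot using hpair
  set W₈ : Set (X × X) := ⋂ ab ∈ Or ×ˢ Os, V ab with hW₈def
  have hW₈mem : W₈ ∈ uniformity X :=
    (Filter.biInter_mem (hfinr.prod hfins)).mpr fun ab _ => hVmem ab
  have hW₈ : ∀ i j : ℕ, (f^[i] r, f^[j] s) ∉ W₈ := by
    intro i j h
    have hmem : (f^[i] r, f^[j] s) ∈ Or ×ˢ Os := ⟨⟨i, rfl⟩, ⟨j, rfl⟩⟩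
    exact hVnot _ hmem (Set.mem_iInter₂.mp h _ hmem)
  -- halvings
  obtain ⟨W₂, hW₂, hW₂s, hW₂c⟩ := comp_symm_mem_uniformity_sets hW₈mem
  obtain ⟨W₁, hW₁, hW₁s, hW₁c⟩ := comp_symm_mem_uniformity_sets hW₂
  obtain ⟨W₀, hW₀, hW₀s, hW₀c⟩ := comp_symm_mem_uniformity_sets hW₁
  obtain ⟨W, ⟨hWmem, hWo, hWs⟩, hWsub⟩ :=
    uniformity_hasBasis_open_symmetric.mem_iff.mp hW₀
  -- a chain of four W-steps lands in W₂
  have h4 : ∀ {a b c d e : X}, (a, b) ∈ W → (b, c) ∈ W → (c, d) ∈ W → (d, e) ∈ W →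
      (a, e) ∈ W₂ := by
    intro a b c d e h1 h2 h3 h5
    have hac : (a, c) ∈ W₁ := hW₀c ⟨b, hWsub h1, hWsub h2⟩
    have hce : (c, e) ∈ W₁ := hW₀c ⟨d, hWsub h3, hWsub h5⟩
    exact hW₁c ⟨c, hac, hce⟩
  -- every point is W₂-far from at least one of the two orbits
  have hfar : ∀ x : X, (∀ j, (x, f^[j] r) ∉ W₂) ∨ (∀ j, (x, f^[j] s) ∉ W₂) := by
    intro x
    by_contra h
    push_neg at h
    obtain ⟨⟨j₁, h₁⟩, ⟨j₂, h₂⟩⟩ := h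
    exact hW₈ j₁ j₂ (hW₂c ⟨x, hW₂s.symm _ _ h₁, h₂⟩)
  refine ⟨W, hWmem, fun x N hN => ?_⟩
  obtain ⟨O, hON, hOopen, hxO⟩ := _root_.mem_nhds_iff.mp hN
  -- the far orbit for x
  obtain ⟨q, hqper, hq⟩ : ∃ q : X, (∃ n ≥ 1, f^[n] q = q) ∧ ∀ j, (x, f^[j] q) ∉ W₂ := by
    rcases hfar x with h | h
    exacts [⟨r, ⟨mr, hmr1, hmr⟩, h⟩, ⟨s, ⟨ms, hms1, hms⟩, h⟩]
  -- a periodic point p near x inside N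
  set G : Set X := O ∩ ball x W with hGdef
  have hGopen : IsOpen G := hOopen.inter (isOpen_ball x hWo)
  have hxG : x ∈ G := ⟨hxO, mem_ball_self x hWmem⟩
  obtain ⟨p, ⟨m, hm1, hpm⟩, hpG⟩ :=
    hdense.exists_mem_open hGopen ⟨x, hxG⟩
  -- the open set around the orbit of q
  set Vq : Set X := ⋂ i ∈ Finset.range (m + 1), f^[i] ⁻¹' ball (f^[i] q) W
    with hVqdef
  have hVqopen : IsOpen Vq :=
    isOpen_biInter_finset fun i _ => (isOpen_ball _ hWo).preimage (hf.iterate i)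
  have hqVq : q ∈ Vq :=
    Set.mem_iInter₂.mpr fun i _ => mem_ball_self _ hWmem
  obtain ⟨k, hk1, w, ⟨z, hzG, rfl⟩, hwV⟩ :=
    htrans G Vq hGopen hVqopen ⟨x, hxG⟩ ⟨q, hqVq⟩
  -- choose n : a multiple of m with k ≤ n ≤ k + m
  set n : ℕ := m * (k / m + 1) with hndef
  have hmod : k % m < m := Nat.mod_lt k hm1
  have hdm : m * (k / m) + k % m = k := Nat.div_add_mod k m
  have hexp : n = m * (k / m) + m := by rw [hndef, Nat.mul_add, Nat.mul_one]
  have hkn : k ≤ n := by omega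
  have hnk : n - k ≤ m := by omega
  have hfnp : f^[n] p = p := by
    rw [hndef, Function.iterate_mul, Function.iterate_fixed hpm]
  have hfnz : f^[n] z = f^[n - k] (f^[k] z) := by
    rw [← Function.iterate_add_apply, Nat.sub_add_cancel hkn]
  have hzW : (f^[n - k] q, f^[n] z) ∈ W := by
    rw [hfnz]
    have := Set.mem_iInter₂.mp hwV (n - k) (Finset.mem_range.mpr (by omega))
    exact this
  by_cases hxp : (f^[n] x, f^[n] p) ∈ W
  · refine ⟨z, hON hzG.1, n, fun hxz => ?_⟩
    have h1 : (x, p) ∈ W := hpG.2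
    have h2 : (p, f^[n] x) ∈ W := by
      have := hWs.symm _ _ hxp
      rwa [hfnp] at this
    have h3 : (f^[n] z, f^[n - k] q) ∈ W := hWs.symm _ _ hzW
    exact hq (n - k) (h4 h1 h2 hxz h3)
  · exact ⟨p, hON hpG.1, n, hxp⟩
end

section
/- Let A = 𝒜 × ℕ with 𝒜 uncountable, C = {0,1}^A with the product topology ({0,1} discrete), and σ : C → C the shift (σf)(α,i) = f(α,i+1). Then σ is a chaotic map on a non-metrizable space: σ is continuous, topologically transitive, has dense periodic points, and C is not metrizable. -/
section Aux

variable {𝒜 : Type*}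

/-- open sets in the product topology contain a finitely-determined box. -/
lemma aux_open_finset {U : Set (𝒜 × ℕ → Bool)} (hU : IsOpen U) {f : 𝒜 × ℕ → Bool}
    (hf : f ∈ U) :
    ∃ I : Finset (𝒜 × ℕ), ∀ g : 𝒜 × ℕ → Bool, (∀ p ∈ I, g p = f p) → g ∈ U := by
  obtain ⟨I, u, h1, h2⟩ := isOpen_pi_iff.mp hU f hf
  refine ⟨I, fun g hg => h2 fun p hp => ?_⟩
  rw [hg p hp]
  exact (h1 p hp).2

lemma aux_shift_iter (f : 𝒜 × ℕ → Bool) (n : ℕ) (p : 𝒜 × ℕ) :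
    ((fun f : 𝒜 × ℕ → Bool => fun p => f (p.1, p.2 + 1))^[n] f) p = f (p.1, p.2 + n) := by
  induction n generalizing p with
  | zero => simp
  | succ n ih =>
    rw [Function.iterate_succ_apply']
    show ((fun f : 𝒜 × ℕ → Bool => fun p => f (p.1, p.2 + 1))^[n] f) (p.1, p.2 + 1) = _
    rw [ih]
    have : p.2 + 1 + n = p.2 + (n + 1) := by omega
    rw [this]

end Aux

/-- Theorem 2: for uncountable `𝒜`, the shift on `C = {0,1}^(𝒜 × ℕ)` is a
chaotic map (continuous, transitive, dense periodic points) on a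
non-metrizable space. -/
theorem shift_chaotic_nonmetrizable (𝒜 : Type*) (h𝒜 : ¬ Countable 𝒜) :
    (let σ : (𝒜 × ℕ → Bool) → (𝒜 × ℕ → Bool) := fun f => fun p => f (p.1, p.2 + 1)
     Continuous σ ∧
      (∀ U V : Set (𝒜 × ℕ → Bool), IsOpen U → IsOpen V → U.Nonempty → V.Nonempty →
        ∃ n ≥ 1, (σ^[n] '' U ∩ V).Nonempty) ∧
      Dense {f : 𝒜 × ℕ → Bool | ∃ k ≥ 1, σ^[k] f = f} ∧
      ¬ TopologicalSpace.MetrizableSpace (𝒜 × ℕ → Bool)) := by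
  intro σ
  refine ⟨?_, ?_, ?_, ?_⟩
  · -- continuity
    exact continuous_pi fun p => continuous_apply _
  · -- transitivity
    intro U V hU hV ⟨f, hf⟩ ⟨g, hg⟩
    obtain ⟨I, hI⟩ := aux_open_finset hU hf
    set n : ℕ := (I.image Prod.snd).sup id + 1 with hn
    refine ⟨n, Nat.le_add_left 1 _, ?_⟩
    set h : 𝒜 × ℕ → Bool := fun p => if p.2 < n then f p else g (p.1, p.2 - n) with hh
    have h1 : h ∈ U := by
      apply hI
      intro p hp
      have : p.2 ≤ (I.image Prod.snd).sup id :=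
        Finset.le_sup (f := id) (Finset.mem_image_of_mem Prod.snd hp)
      have hlt : p.2 < n := hn ▸ Nat.lt_succ_of_le this
      show (if p.2 < n then f p else g (p.1, p.2 - n)) = f p
      rw [if_pos hlt]
    have h2 : σ^[n] h = g := by
      funext p
      rw [show σ = (fun f : 𝒜 × ℕ → Bool => fun p => f (p.1, p.2 + 1)) from rfl]
      rw [aux_shift_iter]
      simp [hh]
    exact ⟨g, ⟨h, h1, h2⟩, hg⟩
  · -- dense periodic points
    rw [dense_iff_inter_open]
    intro U hU ⟨f, hf⟩
    obtain ⟨I, hI⟩ := aux_open_finset hU hf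
    set k : ℕ := (I.image Prod.snd).sup id + 1 with hk
    set g : 𝒜 × ℕ → Bool := fun p => f (p.1, p.2 % k) with hg
    refine ⟨g, ?_, k, Nat.le_add_left 1 _, ?_⟩
    · apply hI
      intro p hp
      have : p.2 ≤ (I.image Prod.snd).sup id :=
        Finset.le_sup (f := id) (Finset.mem_image_of_mem Prod.snd hp)
      have hlt : p.2 < k := hk ▸ Nat.lt_succ_of_le this
      show f (p.1, p.2 % k) = f p
      rw [Nat.mod_eq_of_lt hlt]
    · funext p
      rw [show σ = (fun f : 𝒜 × ℕ → Bool => fun p => f (p.1, p.2 + 1)) from rfl]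
      rw [aux_shift_iter]
      simp [hg, Nat.add_mod_right]
  · -- non-metrizable
    intro hmet
    haveI := hmet
    haveI : FirstCountableTopology (𝒜 × ℕ → Bool) := inferInstance
    classical
    set f : 𝒜 × ℕ → Bool := fun _ => false with hf
    obtain ⟨u, hu⟩ := (nhds f).exists_antitone_basis
    have hIn : ∀ n : ℕ, ∃ I : Finset (𝒜 × ℕ),
        ∀ g : 𝒜 × ℕ → Bool, (∀ p ∈ I, g p = f p) → g ∈ u n := by
      intro n
      have hm : u n ∈ nhds f := hu.mem n
      obtain ⟨I, hI⟩ := aux_open_finset isOpen_interior (mem_interior_iff_mem_nhds.mpr hm)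
      exact ⟨I, fun g hg => interior_subset (hI g hg)⟩
    choose I hI using hIn
    set S : Set 𝒜 := ⋃ n, Prod.fst '' (I n : Set (𝒜 × ℕ)) with hS
    have hSc : S.Countable :=
      Set.countable_iUnion fun n => ((I n).finite_toSet.image Prod.fst).countable
    have : ∃ α : 𝒜, α ∉ S := by
      by_contra h
      push_neg at h
      have : S = Set.univ := Set.eq_univ_of_forall h
      rw [this] at hSc
      exact h𝒜 (Set.countable_univ_iff.mp hSc)
    obtain ⟨α₀, hα₀⟩ := this
    set a : 𝒜 × ℕ := (α₀, 0) with ha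
    set W : Set (𝒜 × ℕ → Bool) := {g | g a = false} with hW
    have hWopen : IsOpen W := by
      have : W = (fun g : 𝒜 × ℕ → Bool => g a) ⁻¹' {false} := rfl
      rw [this]
      exact (continuous_apply a).isOpen_preimage _ (isOpen_discrete _)
    have hWmem : W ∈ nhds f := hWopen.mem_nhds (by simp [hW, hf])
    obtain ⟨n, hn⟩ := hu.toHasBasis.mem_iff.mp hWmem
    set g : 𝒜 × ℕ → Bool := fun p => if p = a then true else false with hg
    have hgu : g ∈ u n := by
      apply hI
      intro p hp
      have hpa : p ≠ a := by
        intro h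
        exact hα₀ (Set.mem_iUnion.mpr ⟨n, ⟨p, hp, by rw [h, ha]⟩⟩)
      show (if p = a then true else false) = f p
      rw [if_neg hpa]
    have : g ∈ W := hn.2 hgu
    have : (if a = a then true else false) = false := this
    simp at this
end
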